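/- Local satisfaction in HI is preserved by translations along signature morphisms that are identities on nominals and modalities: for such a morphism φ = (id, id, φ₀) : (Nom, Λ, Σ) → (Nom, Λ, Σ'), any Kripke model (M', W) over the target, any world w, and any sentence ρ over the source, (M', W) ⊨^w Sen^HI(φ)(ρ) iff (Mod^I(φ₀)∘M', W) ⊨^w ρ, where the reduct Kripke model has the same frame W and world-wise reduced components, provided the quantification space is closed under the relevant pushouts with weak amalgamation. -/
import Mathlib


/- Statement 17: local satisfaction in the hybridisation HI is preserved by
translations along signature morphisms that are identities on nominals and
modalities, for the full sentence syntax including institution-theoretic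
quantifiers over a quantification space D closed under pushouts with weak
amalgamation. -/

universe u v w

variable (Sig : Type u) (Mor : Sig → Sig → Type u)
variable (Sen : Sig → Type v) (Mod : Sig → Type w)

/-- Pushout data for a morphism φ : A → B along a quantification morphism
χ : A → C (in the quantification space `D`): an object `P`, a quantification
morphism `qχ : B → P` (again in `D`) and a morphism `qφ : C → P`. -/
structure POut (D : ∀ A B : Sig, Mor A B → Prop) (A B C : Sig)
    (φ : Mor A B) (χ : Mor A C) : Type u where
  P : Sig
  qχ : Mor B P
  qφ : Mor C P
  hq : D B P qχ

/-- Sentences of HI over signature `A`: base sentences, nominals, Booleans,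
modalities, @, and quantifiers over designated morphisms of `D`. -/
inductive HSen (Nom : Type u) (Λ : ℕ → Type u)
    (D : ∀ A B : Sig, Mor A B → Prop) : Sig → Type (max u v) where
  | base (A : Sig) : Sen A → HSen Nom Λ D A
  | nom (A : Sig) : Nom → HSen Nom Λ D A
  | and (A : Sig) : HSen Nom Λ D A → HSen Nom Λ D A → HSen Nom Λ D A
  | or (A : Sig) : HSen Nom Λ D A → HSen Nom Λ D A → HSen Nom Λ D A
  | imp (A : Sig) : HSen Nom Λ D A → HSen Nom Λ D A → HSen Nom Λ D A
  | not (A : Sig) : HSen Nom Λ D A → HSen Nom Λ D A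
  | box (A : Sig) (n : ℕ) : Λ (n + 1) → (Fin n → HSen Nom Λ D A) → HSen Nom Λ D A
  | dia (A : Sig) (n : ℕ) : Λ (n + 1) → (Fin n → HSen Nom Λ D A) → HSen Nom Λ D A
  | at_ (A : Sig) : Nom → HSen Nom Λ D A → HSen Nom Λ D A
  | all (A B : Sig) (χ : Mor A B) (hχ : D A B χ) : HSen Nom Λ D B → HSen Nom Λ D A
  | ex (A B : Sig) (χ : Mor A B) (hχ : D A B χ) : HSen Nom Λ D B → HSen Nom Λ D A

/-- Kripke models over signature `A` with fixed world set `W`. -/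
structure Kripke (W : Type u) (Nom : Type u) (Λ : ℕ → Type u) (A : Sig) where
  rel : ∀ n : ℕ, Λ n → (Fin n → W) → Prop
  nomI : Nom → W
  mod : W → Mod A

/-- Reduct of a Kripke model along a morphism that is the identity on nominals
and modalities: same frame, world-wise reduct of the base models. -/
def kred {W Nom : Type u} {Λ : ℕ → Type u}
    (modRed : ∀ A B : Sig, Mor A B → Mod B → Mod A) (A B : Sig) (φ : Mor A B)
    (K : Kripke Sig Mod W Nom Λ B) : Kripke Sig Mod W Nom Λ A :=
  { rel := K.rel, nomI := K.nomI, mod := fun w => modRed A B φ (K.mod w) }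

/-- Local satisfaction of HI-sentences; quantifiers range over χ-expansions of
the Kripke model (same frame and nominal interpretation). -/
def locSat {W Nom : Type u} {Λ : ℕ → Type u} {D : ∀ A B : Sig, Mor A B → Prop}
    (sat : ∀ A : Sig, Mod A → Sen A → Prop)
    (modRed : ∀ A B : Sig, Mor A B → Mod B → Mod A) :
    ∀ A : Sig, Kripke Sig Mod W Nom Λ A → W → HSen Sig Mor Sen Nom Λ D A → Prop
  | A, K, w, .base _ ρ => sat A (K.mod w) ρ
  | _, K, w, .nom _ i => K.nomI i = w
  | A, K, w, .and _ ρ σ => locSat sat modRed A K w ρ ∧ locSat sat modRed A K w σ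
  | A, K, w, .or _ ρ σ => locSat sat modRed A K w ρ ∨ locSat sat modRed A K w σ
  | A, K, w, .imp _ ρ σ => locSat sat modRed A K w ρ → locSat sat modRed A K w σ
  | A, K, w, .not _ ρ => ¬ locSat sat modRed A K w ρ
  | A, K, w, .box _ n l args =>
      ∀ t : Fin (n + 1) → W, t 0 = w → K.rel (n + 1) l t →
        ∃ i : Fin n, locSat sat modRed A K (t i.succ) (args i)
  | A, K, w, .dia _ n l args =>
      ∃ t : Fin (n + 1) → W, t 0 = w ∧ K.rel (n + 1) l t ∧
        ∀ i : Fin n, locSat sat modRed A K (t i.succ) (args i)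
  | A, K, _, .at_ _ i ρ => locSat sat modRed A K (K.nomI i) ρ
  | A, K, w, .all _ B χ _ ρ =>
      ∀ K₁ : Kripke Sig Mod W Nom Λ B,
        kred Sig Mor Mod modRed A B χ K₁ = K → locSat sat modRed B K₁ w ρ
  | A, K, w, .ex _ B χ _ ρ =>
      ∃ K₁ : Kripke Sig Mod W Nom Λ B,
        kred Sig Mor Mod modRed A B χ K₁ = K ∧ locSat sat modRed B K₁ w ρ

/-- Sentence translation along a morphism (identity on nominals and
modalities): base sentences are translated by `senTr`, quantified sentences by
the designated pushout of the quantification morphism. -/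
def hTr {Nom : Type u} {Λ : ℕ → Type u} {D : ∀ A B : Sig, Mor A B → Prop}
    (senTr : ∀ A B : Sig, Mor A B → Sen A → Sen B)
    (po : ∀ (A B C : Sig) (φ : Mor A B) (χ : Mor A C), D A C χ →
        POut Sig Mor D A B C φ χ) :
    ∀ (A B : Sig), Mor A B → HSen Sig Mor Sen Nom Λ D A → HSen Sig Mor Sen Nom Λ D B
  | A, B, φ, .base _ ρ => .base B (senTr A B φ ρ)
  | _, B, _, .nom _ i => .nom B i
  | A, B, φ, .and _ ρ σ => .and B (hTr senTr po A B φ ρ) (hTr senTr po A B φ σ)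
  | A, B, φ, .or _ ρ σ => .or B (hTr senTr po A B φ ρ) (hTr senTr po A B φ σ)
  | A, B, φ, .imp _ ρ σ => .imp B (hTr senTr po A B φ ρ) (hTr senTr po A B φ σ)
  | A, B, φ, .not _ ρ => .not B (hTr senTr po A B φ ρ)
  | A, B, φ, .box _ n l args => .box B n l (fun i => hTr senTr po A B φ (args i))
  | A, B, φ, .dia _ n l args => .dia B n l (fun i => hTr senTr po A B φ (args i))
  | A, B, φ, .at_ _ i ρ => .at_ B i (hTr senTr po A B φ ρ)
  | A, B, φ, .all _ C χ hχ ρ =>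
      .all B (po A B C φ χ hχ).P (po A B C φ χ hχ).qχ (po A B C φ χ hχ).hq
        (hTr senTr po C (po A B C φ χ hχ).P (po A B C φ χ hχ).qφ ρ)
  | A, B, φ, .ex _ C χ hχ ρ =>
      .ex B (po A B C φ χ hχ).P (po A B C φ χ hχ).qχ (po A B C φ χ hχ).hq
        (hTr senTr po C (po A B C φ χ hχ).P (po A B C φ χ hχ).qφ ρ)

theorem kripke_ext {W Nom : Type u} {Λ : ℕ → Type u} {A : Sig}
    (K L : Kripke Sig Mod W Nom Λ A) (h1 : K.rel = L.rel)
    (h2 : K.nomI = L.nomI) (h3 : K.mod = L.mod) : K = L := by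
  cases K; cases L; cases h1; cases h2; cases h3; rfl

/-- given the base satisfaction condition, commutation of model
reducts over the designated pushout squares, and weak amalgamation of these
squares (closure of the quantification space under the relevant pushouts),
local satisfaction in HI is preserved by translation along any signature
morphism φ that is the identity on nominals and modalities:
(M',W) ⊨^w Sen^HI(φ)(ρ) iff the φ-reduct Kripke model (same frame, world-wise
reduced components) satisfies ρ at w. -/
theorem hybrid_translation_satisfaction
    {W Nom : Type u} {Λ : ℕ → Type u} {D : ∀ A B : Sig, Mor A B → Prop}
    (sat : ∀ A : Sig, Mod A → Sen A → Prop)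
    (senTr : ∀ A B : Sig, Mor A B → Sen A → Sen B)
    (modRed : ∀ A B : Sig, Mor A B → Mod B → Mod A)
    (po : ∀ (A B C : Sig) (φ : Mor A B) (χ : Mor A C), D A C χ →
        POut Sig Mor D A B C φ χ)
    -- the satisfaction condition of the base institution
    (satCond : ∀ (A B : Sig) (φ : Mor A B) (M : Mod B) (ρ : Sen A),
        sat B M (senTr A B φ ρ) ↔ sat A (modRed A B φ M) ρ)
    -- the designated pushout squares commute for model reducts
    (hfunct : ∀ (A B C : Sig) (φ : Mor A B) (χ : Mor A C) (hχ : D A C χ)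
        (N : Mod (po A B C φ χ hχ).P),
        modRed A C χ (modRed C _ (po A B C φ χ hχ).qφ N) =
          modRed A B φ (modRed B _ (po A B C φ χ hχ).qχ N))
    -- weak amalgamation for the designated pushout squares
    (hamalg : ∀ (A B C : Sig) (φ : Mor A B) (χ : Mor A C) (hχ : D A C χ)
        (M' : Mod B) (M₁ : Mod C), modRed A B φ M' = modRed A C χ M₁ →
        ∃ N : Mod (po A B C φ χ hχ).P,
          modRed B _ (po A B C φ χ hχ).qχ N = M' ∧
            modRed C _ (po A B C φ χ hχ).qφ N = M₁) :
    ∀ (A B : Sig) (φ : Mor A B) (K' : Kripke Sig Mod W Nom Λ B) (w : W)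
      (ρ : HSen Sig Mor Sen Nom Λ D A),
      locSat Sig Mor Sen Mod sat modRed B K' w (hTr Sig Mor Sen senTr po A B φ ρ) ↔
        locSat Sig Mor Sen Mod sat modRed A
          (kred Sig Mor Mod modRed A B φ K') w ρ := by
  
  intro A B φ K' w ρ
  induction ρ generalizing B K' w with
  | base A ρ₀ => simp [locSat, hTr, kred, satCond]
  | nom A i => simp [locSat, hTr, kred]
  | and A ρ σ ihρ ihσ => simp [locSat, hTr, ihρ, ihσ]
  | or A ρ σ ihρ ihσ => simp [locSat, hTr, ihρ, ihσ]
  | imp A ρ σ ihρ ihσ => simp [locSat, hTr, ihρ, ihσ]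
  | not A ρ ihρ => simp [locSat, hTr, ihρ]
  | box A n l args ih => simp [locSat, hTr, kred, ih]
  | dia A n l args ih => simp [locSat, hTr, kred, ih]
  | at_ A i ρ ihρ => simp [locSat, hTr, kred, ihρ]
  | all A C χ hχ ρ ih =>
    simp only [locSat, hTr]
    constructor
    · intro h K₂ hK₂
      have hrel : K₂.rel = K'.rel := congrArg Kripke.rel hK₂
      have hnom : K₂.nomI = K'.nomI := congrArg Kripke.nomI hK₂
      have hmod : ∀ v, modRed A C χ (K₂.mod v) = modRed A B φ (K'.mod v) :=
        fun v => congrArg (fun K => Kripke.mod K v) hK₂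
      choose N hN1 hN2 using fun v =>
        hamalg A B C φ χ hχ (K'.mod v) (K₂.mod v) (hmod v).symm
      have h1 : kred Sig Mor Mod modRed B _ (po A B C φ χ hχ).qχ
          ⟨K'.rel, K'.nomI, N⟩ = K' :=
        kripke_ext Sig Mod _ _ rfl rfl (funext hN1)
      have h2 := (ih _ (po A B C φ χ hχ).qφ ⟨K'.rel, K'.nomI, N⟩ w).mp (h _ h1)
      have h3 : kred Sig Mor Mod modRed C _ (po A B C φ χ hχ).qφ
          ⟨K'.rel, K'.nomI, N⟩ = K₂ :=
        kripke_ext Sig Mod _ _ hrel.symm hnom.symm (funext hN2)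
      rwa [h3] at h2
    · intro h K₁ hK₁
      rw [ih]
      apply h
      refine kripke_ext Sig Mod _ _ ?_ ?_ ?_
      · show K₁.rel = K'.rel
        exact congrArg Kripke.rel hK₁
      · show K₁.nomI = K'.nomI
        exact congrArg Kripke.nomI hK₁
      · funext v
        have := congrArg (fun K => Kripke.mod K v) hK₁
        simp only [kred] at this ⊢
        rw [hfunct, this]
  | ex A C χ hχ ρ ih =>
    simp only [locSat, hTr]
    constructor
    · rintro ⟨K₁, hK₁, hs⟩
      refine ⟨kred Sig Mor Mod modRed C _ (po A B C φ χ hχ).qφ K₁, ?_, (ih _ _ _ _).mp hs⟩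
      refine kripke_ext Sig Mod _ _ ?_ ?_ ?_
      · show K₁.rel = K'.rel
        exact congrArg Kripke.rel hK₁
      · show K₁.nomI = K'.nomI
        exact congrArg Kripke.nomI hK₁
      · funext v
        have := congrArg (fun K => Kripke.mod K v) hK₁
        simp only [kred] at this ⊢
        rw [hfunct, this]
    · rintro ⟨K₂, hK₂, hs⟩
      have hrel : K₂.rel = K'.rel := congrArg Kripke.rel hK₂
      have hnom : K₂.nomI = K'.nomI := congrArg Kripke.nomI hK₂
      have hmod : ∀ v, modRed A C χ (K₂.mod v) = modRed A B φ (K'.mod v) :=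
        fun v => congrArg (fun K => Kripke.mod K v) hK₂
      choose N hN1 hN2 using fun v =>
        hamalg A B C φ χ hχ (K'.mod v) (K₂.mod v) (hmod v).symm
      refine ⟨⟨K'.rel, K'.nomI, N⟩,
        kripke_ext Sig Mod _ _ rfl rfl (funext hN1), ?_⟩
      rw [ih]
      have h3 : kred Sig Mor Mod modRed C _ (po A B C φ χ hχ).qφ
          ⟨K'.rel, K'.nomI, N⟩ = K₂ :=
        kripke_ext Sig Mod _ _ hrel.symm hnom.symm (funext hN2)
      rwa [h3]
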